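/- Let D be an abelian category with enough projectives and enough injectives, let X be a class of objects of D closed under isomorphisms, and let 0 → A → B → C → 0 be a short exact sequence in D. Then: (a) X^⊥-cores B ≤ max{X^⊥-cores A, X^⊥-cores C}; (b) X^⊥-cores C ≤ max{X^⊥-cores A − 1, X^⊥-cores B}; (c) X^⊥-cores A ≤ max{X^⊥-cores B, X^⊥-cores C + 1}. -/

import Mathlib

open CategoryTheory CategoryTheory.Limits

universe w v u

namespace Paper

variable {D : Type u} [Category.{v} D] [Abelian D]

section
variable [HasExt.{w} D]

/-- The right perpendicular class `X^⊥` of a class of objects: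
objects `M` with `Ext^i(A, M) = 0` for all `A` in the class and all `i ≥ 1`. -/
def perp (X : D → Prop) : D → Prop :=
  fun M => ∀ A, X A → ∀ i : ℕ, 1 ≤ i → Subsingleton (Abelian.Ext A M i)

end

/-- `CoresSeq W n M Z` : there is an exact sequence
`0 → M → W₀ → ⋯ → W_{n-1} → Z → 0` with each `Wᵢ` in `W`. -/
def CoresSeq (W : D → Prop) : ℕ → D → D → Prop
  | 0, M, Z => Nonempty (M ≅ Z)
  | n + 1, M, Z => ∃ (W₀ K : D) (f : M ⟶ W₀) (g : W₀ ⟶ K) (h : f ≫ g = 0),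
      W W₀ ∧ (ShortComplex.mk f g h).ShortExact ∧ CoresSeq W n K Z

/-- The `W`-coresolution dimension of an object, valued in `ℕ∞`:
the least `n` such that there is an exact sequence `0 → M → W₀ → ⋯ → Wₙ → 0`
with all `Wᵢ` in `W` (and `∞` if there is no such sequence). -/
noncomputable def coresDim (W : D → Prop) (M : D) : ℕ∞ :=
  sInf {n : ℕ∞ | ∃ m : ℕ, n = (m : ℕ∞) ∧ ∃ Z, W Z ∧ CoresSeq W m M Z}



/-! ### Auxiliary material -/

section Auxiliary

/-- A chain map to a single complex concentrated in degree `j`, from a complex exact at `j`,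
with injective target object, is null-homotopic. -/
noncomputable def homotopyToSingle (K : CochainComplex D ℤ) {I : D} [Injective I] (j : ℤ)
    (hK : K.ExactAt j) (g : K ⟶ (HomologicalComplex.single D (ComplexShape.up ℤ) j).obj I) :
    Homotopy g 0 := by
  have hnext : ∀ i : ℤ, (ComplexShape.up ℤ).next i = i + 1 :=
    fun i => (ComplexShape.up ℤ).next_eq' rfl
  have relnext : ∀ i : ℤ, (ComplexShape.up ℤ).Rel i ((ComplexShape.up ℤ).next i) :=
    fun i => by rw [hnext]; exact rfl
  have hS : (K.sc j).Exact := hK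
  have hf : (K.sc j).f ≫ (g.f j ≫ (HomologicalComplex.singleObjXSelf
      (ComplexShape.up ℤ) j I).hom) = 0 := by
    have hco := g.comm ((ComplexShape.up ℤ).prev j) j
    change K.d ((ComplexShape.up ℤ).prev j) j ≫ (g.f j ≫
      (HomologicalComplex.singleObjXSelf (ComplexShape.up ℤ) j I).hom) = 0
    rw [← Category.assoc, ← hco]
    simp
  set q : K.X ((ComplexShape.up ℤ).next j) ⟶ I :=
    hS.descToInjective _ hf with hq
  have hq' : K.d j ((ComplexShape.up ℤ).next j) ≫ q =
      g.f j ≫ (HomologicalComplex.singleObjXSelf (ComplexShape.up ℤ) j I).hom :=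
    hS.comp_descToInjective _ hf
  refine
    { hom := fun i i' =>
        if h : i = (ComplexShape.up ℤ).next j ∧ i' = j then
          eqToHom (congrArg K.X h.1) ≫ q ≫
            (HomologicalComplex.singleObjXSelf (ComplexShape.up ℤ) j I).inv ≫
            eqToHom (congrArg (((HomologicalComplex.single D (ComplexShape.up ℤ) j).obj I).X)
              h.2.symm)
        else 0
      zero := ?_
      comm := ?_ }
  · intro i i' hrel
    rw [dif_neg]
    rintro ⟨rfl, rfl⟩
    exact hrel (relnext _)
  · intro i
    have hprev : ∀ (f : ∀ i i', K.X i ⟶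
        ((HomologicalComplex.single D (ComplexShape.up ℤ) j).obj I).X i'), prevD i f = 0 := by
      intro f
      have hd : ((HomologicalComplex.single D (ComplexShape.up ℤ) j).obj I).d
          ((ComplexShape.up ℤ).prev i) i = 0 := HomologicalComplex.single_obj_d _ _ _ _ _
      show f i _ ≫ _ = 0
      rw [hd, comp_zero]
    rw [dNext_eq _ (relnext i), hprev]
    by_cases hij : i = j
    · subst hij
      rw [dif_pos ⟨rfl, rfl⟩]
      simp only [eqToHom_refl, Category.comp_id, Category.id_comp,
        HomologicalComplex.zero_f_apply, add_zero]
      rw [← Category.assoc, hq']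
      simp
    · have hzero : IsZero (((HomologicalComplex.single D (ComplexShape.up ℤ) j).obj I).X i) :=
        HomologicalComplex.isZero_single_obj_X (ComplexShape.up ℤ) j I i hij
      have h1 : g.f i = 0 := hzero.eq_of_tgt _ _
      rw [dif_neg (fun h => hij h.2), comp_zero, h1]
      simp

/-- Vanishing of `Ext`-groups in positive degrees when the second argument is injective. -/
lemma ext_subsingleton_of_injective [HasExt.{w} D] (X : D) {I : D} (hI : Injective I)
    (n : ℕ) (hn : 1 ≤ n) : Subsingleton (Abelian.Ext X I n) := by
  letI := HasDerivedCategory.standard D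
  have e := Abelian.Ext.homEquiv (C := D) (X := X) (Y := I) (n := n)
  suffices h : Subsingleton (ShiftedHom ((DerivedCategory.singleFunctor D 0).obj X)
      ((DerivedCategory.singleFunctor D 0).obj I) (n : ℤ)) from e.subsingleton
  let e2 : (((DerivedCategory.singleFunctor D 0).obj I)⟦(n : ℤ)⟧ :) ≅
      (DerivedCategory.singleFunctor D (-(n : ℤ))).obj I :=
    ((DerivedCategory.singleFunctors D).shiftIso (n : ℤ) (-(n : ℤ)) 0 (by omega)).app I
  have key : ∀ (φ : (DerivedCategory.singleFunctor D 0).obj X ⟶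
      (DerivedCategory.singleFunctor D (-(n : ℤ))).obj I), φ = 0 := by
    intro φ
    haveI : (HomotopyCategory.quasiIso D (ComplexShape.up ℤ)).HasRightCalculusOfFractions := by
      rw [HomotopyCategory.quasiIso_eq_subcategoryAcyclic_W]; infer_instance
    obtain ⟨rf, hrf⟩ := Localization.exists_rightFraction DerivedCategory.Qh
      (HomotopyCategory.quasiIso D (ComplexShape.up ℤ))
      (X := (HomotopyCategory.singleFunctor D 0).obj X)
      (Y := (HomotopyCategory.singleFunctor D (-(n : ℤ))).obj I) φ
    have hiso : IsIso ((HomotopyCategory.homologyFunctor D (ComplexShape.up ℤ)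
        (-(n : ℤ))).map rf.s) := rf.hs (-(n : ℤ))
    have hzt : IsZero ((HomotopyCategory.homologyFunctor D (ComplexShape.up ℤ)
        (-(n : ℤ))).obj ((HomotopyCategory.singleFunctor D 0).obj X)) := by
      refine IsZero.of_iso ?_ ((HomotopyCategory.homologyFunctorFactors D (ComplexShape.up ℤ)
        (-(n : ℤ))).app ((HomologicalComplex.single D (ComplexShape.up ℤ) 0).obj X))
      exact HomologicalComplex.isZero_single_obj_homology _ _ _ _ (by omega)
    have hzs : IsZero ((HomotopyCategory.homologyFunctor D (ComplexShape.up ℤ)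
        (-(n : ℤ))).obj rf.X') :=
      IsZero.of_iso hzt (asIso ((HomotopyCategory.homologyFunctor D (ComplexShape.up ℤ)
        (-(n : ℤ))).map rf.s))
    have hzK : IsZero ((rf.X'.as).homology (-(n : ℤ))) :=
      IsZero.of_iso hzs ((HomotopyCategory.homologyFunctorFactors D (ComplexShape.up ℤ)
        (-(n : ℤ))).app rf.X'.as).symm
    have hexact : (rf.X'.as).ExactAt (-(n : ℤ)) :=
      (HomologicalComplex.exactAt_iff_isZero_homology _ _).mpr hzK
    have ht := homotopyToSingle rf.X'.as (I := I) (-(n : ℤ)) hexact (Quot.out rf.f)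
    have hf0 : rf.f = 0 := by
      rw [← HomotopyCategory.quotient_map_out rf.f]
      exact (HomotopyCategory.eq_of_homotopy _ _ ht).trans
        ((HomotopyCategory.quotient D (ComplexShape.up ℤ)).map_zero _ _)
    have h2 := rf.map_s_comp_map DerivedCategory.Qh
      (Localization.inverts DerivedCategory.Qh (HomotopyCategory.quasiIso D (ComplexShape.up ℤ)))
    rw [hf0, Functor.map_zero] at h2
    haveI : IsIso (DerivedCategory.Qh.map rf.s) :=
      Localization.inverts DerivedCategory.Qh (HomotopyCategory.quasiIso D (ComplexShape.up ℤ))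
        _ rf.hs
    rw [hrf]
    exact (cancel_epi (DerivedCategory.Qh.map rf.s)).mp (h2.trans comp_zero.symm)
  constructor
  intro a b
  show a = b
  have ha : (a ≫ e2.hom : _) = b ≫ e2.hom := by rw [key (a ≫ e2.hom), key (b ≫ e2.hom)]
  simpa using congrArg (fun t => t ≫ e2.inv) ha

section LES

variable [HasExt.{w} D]

open Abelian

lemma sub_X₂ {S : ShortComplex D} (hS : S.ShortExact) (P : D) (i : ℕ)
    (h1 : Subsingleton (Ext P S.X₁ i)) (h3 : Subsingleton (Ext P S.X₃ i)) :
    Subsingleton (Ext P S.X₂ i) := by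
  refine subsingleton_of_forall_eq 0 fun x => ?_
  obtain ⟨x₁, hx₁⟩ := Ext.covariant_sequence_exact₂ P hS x (@Subsingleton.elim _ h3 _ _)
  rw [← hx₁, @Subsingleton.elim _ h1 x₁ 0, Ext.zero_comp]

lemma sub_X₃ {S : ShortComplex D} (hS : S.ShortExact) (P : D) (i : ℕ)
    (h2 : Subsingleton (Ext P S.X₂ i)) (h1 : Subsingleton (Ext P S.X₁ (i + 1))) :
    Subsingleton (Ext P S.X₃ i) := by
  refine subsingleton_of_forall_eq 0 fun x => ?_
  obtain ⟨x₂, hx₂⟩ := Ext.covariant_sequence_exact₃ P hS x rfl (@Subsingleton.elim _ h1 _ _)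
  rw [← hx₂, @Subsingleton.elim _ h2 x₂ 0, Ext.zero_comp]

lemma sub_X₁ {S : ShortComplex D} (hS : S.ShortExact) (P : D) (i : ℕ)
    (h2 : Subsingleton (Ext P S.X₂ (i + 1))) (h3 : Subsingleton (Ext P S.X₃ i)) :
    Subsingleton (Ext P S.X₁ (i + 1)) := by
  refine subsingleton_of_forall_eq 0 fun x => ?_
  obtain ⟨x₃, hx₃⟩ := Ext.covariant_sequence_exact₁ P hS x (@Subsingleton.elim _ h2 _ _) rfl
  rw [← hx₃, @Subsingleton.elim _ h3 x₃ 0, Ext.zero_comp]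

lemma sub_iso (P : D) {M M' : D} (e : M ≅ M') (i : ℕ)
    (h : Subsingleton (Ext P M i)) : Subsingleton (Ext P M' i) := by
  have key : ∀ x : Ext P M' i, x =
      (x.comp (Ext.mk₀ e.inv) (add_zero i)).comp (Ext.mk₀ e.hom) (add_zero i) := by
    intro x
    rw [Ext.comp_assoc_of_second_deg_zero, Ext.mk₀_comp_mk₀, e.inv_hom_id, Ext.comp_mk₀_id]
  constructor
  intro a b
  rw [key a, key b, @Subsingleton.elim _ h (a.comp (Ext.mk₀ e.inv) (add_zero i))
    (b.comp (Ext.mk₀ e.inv) (add_zero i))]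

/-- Vanishing of `Ext^i(P, M)` for all `P` in `X` and all `i > n`. -/
def ExtVan (X : D → Prop) (n : ℕ) (M : D) : Prop :=
  ∀ P, X P → ∀ i : ℕ, n < i → Subsingleton (Abelian.Ext P M i)

lemma extVan_of_coresSeq (X : D → Prop) :
    ∀ (n : ℕ) (M Z : D), perp X Z → CoresSeq (perp X) n M Z → ExtVan X n M := by
  intro n
  induction n with
  | zero =>
    rintro M Z hZ ⟨e⟩ P hP i hi
    exact sub_iso P e.symm i (hZ P hP i hi)
  | succ n ih =>
    rintro M Z hZ ⟨W₀, K, f, g, hw, hW₀, hSE, hK⟩ P hP i hi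
    obtain ⟨j, rfl⟩ : ∃ j, i = j + 1 := ⟨i - 1, by omega⟩
    exact sub_X₁ hSE P j (hW₀ P hP (j + 1) (by omega)) (ih K Z hZ hK P hP j (by omega))

lemma coresSeq_of_extVan (X : D → Prop) [EnoughInjectives D] :
    ∀ (n : ℕ) (M : D), ExtVan X n M → ∃ Z, perp X Z ∧ CoresSeq (perp X) n M Z := by
  intro n
  induction n with
  | zero =>
    intro M hM
    exact ⟨M, fun P hP i hi => hM P hP i hi, ⟨Iso.refl M⟩⟩
  | succ n ih =>
    intro M hM
    set ι := Injective.ι M with hι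
    have hSE : (ShortComplex.mk ι (cokernel.π ι) (cokernel.condition ι)).ShortExact :=
      { exact := ShortComplex.exact_of_g_is_cokernel _ (cokernelIsCokernel ι) }
    have hperpI : perp X (Injective.under M) := fun P hP i hi =>
      ext_subsingleton_of_injective P (Injective.injective_under M) i hi
    have hcok : ExtVan X n (cokernel ι) := fun P hP i hi =>
      sub_X₃ hSE P i (hperpI P hP i (by omega)) (hM P hP (i + 1) (by omega))
    obtain ⟨Z, hZ, hc⟩ := ih _ hcok
    exact ⟨Z, hZ, Injective.under M, cokernel ι, ι, cokernel.π ι, cokernel.condition ι,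
      hperpI, hSE, hc⟩

end LES

lemma coresDim_le_iff (W : D → Prop) (M : D) (n : ℕ) :
    coresDim W M ≤ (n : ℕ∞) ↔ ∃ m : ℕ, m ≤ n ∧ ∃ Z, W Z ∧ CoresSeq W m M Z := by
  constructor
  · intro h
    by_contra hc
    push_neg at hc
    have hge : (n : ℕ∞) + 1 ≤ coresDim W M := by
      apply le_sInf
      rintro x ⟨m, rfl, Z, hZ, hcs⟩
      have hm : ¬ m ≤ n := fun hle => hc m hle Z hZ hcs
      exact_mod_cast (by omega : n + 1 ≤ m)
    have := hge.trans h
    exact absurd (by exact_mod_cast this : n + 1 ≤ n) (by omega)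
  · rintro ⟨m, hm, Z, hZ, hcs⟩
    exact le_trans (sInf_le ⟨m, rfl, Z, hZ, hcs⟩) (by exact_mod_cast hm)

section Dim

variable [HasExt.{w} D] [EnoughInjectives D]

lemma extVan_of_coresDim_le (X : D → Prop) (M : D) (n : ℕ)
    (h : coresDim (perp X) M ≤ (n : ℕ∞)) : ExtVan X n M := by
  rw [coresDim_le_iff] at h
  obtain ⟨m, hm, Z, hZ, hc⟩ := h
  intro P hP i hi
  exact extVan_of_coresSeq X m M Z hZ hc P hP i (by omega)

lemma coresDim_le_of_extVan (X : D → Prop) (M : D) (n : ℕ)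
    (h : ExtVan X n M) : coresDim (perp X) M ≤ (n : ℕ∞) := by
  rw [coresDim_le_iff]
  obtain ⟨Z, hZ, hc⟩ := coresSeq_of_extVan X n M h
  exact ⟨n, le_refl n, Z, hZ, hc⟩

end Dim

end Auxiliary

/-- Lemma 3.4(1) : coresolution dimensions in a short exact sequence `0 → A → B → C → 0`. -/
theorem stmt_1 [EnoughProjectives D] [EnoughInjectives D] [HasExt.{w} D]
    (X : D → Prop) (hX : ∀ A B : D, (A ≅ B) → X A → X B)
    (A B C : D) (f : A ⟶ B) (g : B ⟶ C) (w : f ≫ g = 0)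
    (hse : (ShortComplex.mk f g w).ShortExact) :
    coresDim (perp X) B ≤ max (coresDim (perp X) A) (coresDim (perp X) C) ∧
    coresDim (perp X) C ≤ max (coresDim (perp X) A - 1) (coresDim (perp X) B) ∧
    coresDim (perp X) A ≤ max (coresDim (perp X) B) (coresDim (perp X) C + 1) := by
  refine ⟨?_, ?_, ?_⟩
  · rcases eq_or_ne (coresDim (perp X) A) ⊤ with hA | hA
    · rw [hA]; exact le_max_of_le_left le_top
    rcases eq_or_ne (coresDim (perp X) C) ⊤ with hC | hC
    · rw [hC]; exact le_max_of_le_right le_top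
    obtain ⟨na, hna⟩ := WithTop.ne_top_iff_exists.mp hA
    obtain ⟨nc, hnc⟩ := WithTop.ne_top_iff_exists.mp hC
    have hvA : ExtVan X na A := extVan_of_coresDim_le X A na (le_of_eq hna.symm)
    have hvC : ExtVan X nc C := extVan_of_coresDim_le X C nc (le_of_eq hnc.symm)
    have hvB : ExtVan X (max na nc) B := fun P hP i hi =>
      sub_X₂ hse P i (hvA P hP i (by omega)) (hvC P hP i (by omega))
    have := coresDim_le_of_extVan X B (max na nc) hvB
    refine this.trans ?_
    rw [← hna, ← hnc]
    exact_mod_cast le_refl _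
  · rcases eq_or_ne (coresDim (perp X) B) ⊤ with hB | hB
    · rw [hB]; exact le_max_of_le_right le_top
    rcases eq_or_ne (coresDim (perp X) A) ⊤ with hA | hA
    · rw [hA]; exact le_max_of_le_left (by simp)
    obtain ⟨na, hna⟩ := WithTop.ne_top_iff_exists.mp hA
    obtain ⟨nb, hnb⟩ := WithTop.ne_top_iff_exists.mp hB
    have hvA : ExtVan X na A := extVan_of_coresDim_le X A na (le_of_eq hna.symm)
    have hvB : ExtVan X nb B := extVan_of_coresDim_le X B nb (le_of_eq hnb.symm)
    have hvC : ExtVan X (max (na - 1) nb) C := fun P hP i hi =>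
      sub_X₃ hse P i (hvB P hP i (by omega)) (hvA P hP (i + 1) (by omega))
    have := coresDim_le_of_extVan X C (max (na - 1) nb) hvC
    refine this.trans ?_
    rw [← hna, ← hnb]
    exact_mod_cast le_refl _
  · rcases eq_or_ne (coresDim (perp X) B) ⊤ with hB | hB
    · rw [hB]; exact le_max_of_le_left le_top
    rcases eq_or_ne (coresDim (perp X) C) ⊤ with hC | hC
    · rw [hC]; exact le_max_of_le_right (by simp)
    obtain ⟨nb, hnb⟩ := WithTop.ne_top_iff_exists.mp hB
    obtain ⟨nc, hnc⟩ := WithTop.ne_top_iff_exists.mp hC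
    have hvB : ExtVan X nb B := extVan_of_coresDim_le X B nb (le_of_eq hnb.symm)
    have hvC : ExtVan X nc C := extVan_of_coresDim_le X C nc (le_of_eq hnc.symm)
    have hvA : ExtVan X (max nb (nc + 1)) A := by
      intro P hP i hi
      obtain ⟨j, rfl⟩ : ∃ j, i = j + 1 := ⟨i - 1, by omega⟩
      exact sub_X₁ hse P j (hvB P hP (j + 1) (by omega)) (hvC P hP j (by omega))
    have := coresDim_le_of_extVan X A (max nb (nc + 1)) hvA
    refine this.trans ?_
    rw [← hnb, ← hnc]
    exact_mod_cast le_refl _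

end Paper
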